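/- Let K be a field of characteristic 0 and f ∈ K[x, x⁻¹] a non-constant Laurent polynomial. Then there exists a positive integer N such that every element c ∈ K can be written as c = Σ_{i=1}^N f(x_i) − Σ_{j=1}^N f(y_j) with x_i, y_j ∈ K*. -/

import Mathlib

open Finset

section WaringAux

variable {K : Type*} [Field K] (f : LaurentPolynomial K)

/-- Evaluation of the Laurent polynomial as in the statement. -/
noncomputable def WEv (x : K) : K := ∑ s ∈ f.coeff.support, f.coeff s * x ^ s

/-- `c` is representable as a balanced sum of `N` values minus `N` values. -/
def WRep (N : ℕ) (c : K) : Prop :=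
  ∃ x y : Fin N → K, (∀ i, x i ≠ 0) ∧ (∀ j, y j ≠ 0) ∧
    c = (∑ i, WEv f (x i)) - ∑ j, WEv f (y j)

variable {f}

theorem wrep_pair {x y : K} (hx : x ≠ 0) (hy : y ≠ 0) : WRep f 1 (WEv f x - WEv f y) :=
  ⟨fun _ => x, fun _ => y, fun _ => hx, fun _ => hy, by simp⟩

theorem wrep_neg {N : ℕ} {c : K} (h : WRep f N c) : WRep f N (-c) := by
  obtain ⟨x, y, hx, hy, hc⟩ := h
  exact ⟨y, x, hy, hx, by rw [hc]; ring⟩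

theorem wrep_add {N M : ℕ} {c d : K} (h : WRep f N c) (h' : WRep f M d) :
    WRep f (N + M) (c + d) := by
  obtain ⟨x, y, hx, hy, hc⟩ := h
  obtain ⟨x', y', hx', hy', hd⟩ := h'
  refine ⟨Fin.append x x', Fin.append y y', ?_, ?_, ?_⟩
  · exact fun i => Fin.addCases (fun i => by simpa [Fin.append_left] using hx i)
      (fun i => by simpa [Fin.append_right] using hx' i) i
  · exact fun i => Fin.addCases (fun i => by simpa [Fin.append_left] using hy i)
      (fun i => by simpa [Fin.append_right] using hy' i) i
  · rw [hc, hd, Fin.sum_univ_add, Fin.sum_univ_add]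
    simp only [Fin.append_left, Fin.append_right]
    ring

theorem wrep_zero : WRep f 0 0 :=
  ⟨Fin.elim0, Fin.elim0, fun i => i.elim0, fun i => i.elim0, by simp⟩

theorem wrep_succ {N : ℕ} {c : K} (h : WRep f N c) : WRep f (N + 1) c := by
  have := wrep_add h (wrep_pair (f := f) one_ne_zero one_ne_zero)
  simpa using this

theorem wrep_nsmul {N : ℕ} {c : K} (h : WRep f N c) (n : ℕ) : WRep f (n * N) (n • c) := by
  induction n with
  | zero => simpa using wrep_zero
  | succ k ih =>
    have := wrep_add ih h
    rw [succ_nsmul, add_mul, one_mul]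
    exact this

theorem wrep_zsmul {N : ℕ} {c : K} (h : WRep f N c) (n : ℤ) :
    WRep f (n.natAbs * N) (n • c) := by
  rcases Int.natAbs_eq n with he | he
  · rw [he, natCast_zsmul, Int.natAbs_natCast]; exact wrep_nsmul h n.natAbs
  · rw [he, neg_smul, natCast_zsmul, Int.natAbs_neg, Int.natAbs_natCast]
    exact wrep_neg (wrep_nsmul h n.natAbs)

theorem wrep_sum {ι : Type*} (t : Finset ι) (N : ι → ℕ) (c : ι → K)
    (h : ∀ i ∈ t, WRep f (N i) (c i)) :
    WRep f (∑ i ∈ t, N i) (∑ i ∈ t, c i) := by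
  induction t using Finset.cons_induction with
  | empty => simpa using wrep_zero
  | cons a t ha ih =>
    rw [Finset.sum_cons, Finset.sum_cons]
    exact wrep_add (h a (Finset.mem_cons_self a t))
      (ih fun i hi => h i (Finset.mem_cons_of_mem hi))

end WaringAux

/-- Solving a nonsingular rational linear system with integer numerators. -/
theorem wsolve {n : ℕ} (M : Matrix (Fin n) (Fin n) ℚ) (hM : M.det ≠ 0) (w : Fin n → ℚ) :
    ∃ (D : ℕ) (p : Fin n → ℤ), 0 < D ∧ ∀ s, ∑ k, (p k : ℚ) * M s k = (D : ℚ) * w s := by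
  set l : Fin n → ℚ := M⁻¹.mulVec w with hl
  have hMl : M.mulVec l = w := by
    rw [hl, Matrix.mulVec_mulVec, Matrix.mul_nonsing_inv M (isUnit_iff_ne_zero.mpr hM),
      Matrix.one_mulVec]
  set D : ℕ := ∏ k, (l k).den with hD
  have hDpos : 0 < D := Finset.prod_pos fun k _ => (l k).pos
  refine ⟨D, fun k => (l k).num * ((D / (l k).den : ℕ) : ℤ), hDpos, fun s => ?_⟩
  have key : ∀ k, (((l k).num * ((D / (l k).den : ℕ) : ℤ) : ℤ) : ℚ) = l k * D := by
    intro k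
    have hdvd : (l k).den ∣ D := Finset.dvd_prod_of_mem _ (Finset.mem_univ k)
    have hden : ((l k).den : ℚ) ≠ 0 := by exact_mod_cast (l k).den_nz
    rw [Int.cast_mul, Int.cast_natCast, Nat.cast_div hdvd hden]
    have hnum : ((l k).num : ℚ) = l k * (l k).den := by
      exact_mod_cast (Rat.mul_den_eq_num (l k)).symm
    field_simp
    linear_combination hnum
  have hMls := congrFun hMl s
  simp only [Matrix.mulVec, dotProduct] at hMls
  calc ∑ k, (((l k).num * ((D / (l k).den : ℕ) : ℤ) : ℤ) : ℚ) * M s k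
      = (D:ℚ) * ∑ k, M s k * l k := by
        rw [Finset.mul_sum]; exact Finset.sum_congr rfl fun k _ => by rw [key k]; ring
    _ = (D:ℚ) * w s := by rw [hMls]

theorem stmt_13 (K : Type*) [Field K] [CharZero K] (f : LaurentPolynomial K)
    (hf : ∀ c : K, f ≠ LaurentPolynomial.C c) :
    ∃ N : ℕ, 0 < N ∧ ∀ c : K,
      ∃ x y : Fin N → K, (∀ i, x i ≠ 0) ∧ (∀ j, y j ≠ 0) ∧
        c = ∑ i, (∑ s ∈ f.coeff.support, f.coeff s * x i ^ s)
              - ∑ j, (∑ s ∈ f.coeff.support, f.coeff s * y j ^ s) := by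
  classical
  -- there is a nonzero exponent in the support
  obtain ⟨s₀, hs₀S, hs₀⟩ : ∃ s₀ ∈ f.coeff.support, s₀ ≠ 0 := by
    by_contra h
    push_neg at h
    have hsub : f.coeff.support ⊆ {0} := fun s hs => Finset.mem_singleton.mpr (h s hs)
    have h1 : f = AddMonoidAlgebra.single 0 (f.coeff 0) :=
      AddMonoidAlgebra.coeff_injective (Finsupp.support_subset_singleton.mp hsub)
    rw [LaurentPolynomial.single_eq_C_mul_T, LaurentPolynomial.T_zero, mul_one] at h1
    exact hf (f.coeff 0) h1
  have ha : f.coeff s₀ ≠ 0 := Finsupp.mem_support_iff.mp hs₀S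
  set a : K := f.coeff s₀ with haa
  -- Step 1 : extract the monomial `a * x ^ s₀`
  set T : Finset ℤ := insert 0 f.coeff.support with hT
  set n : ℕ := T.card with hn
  set e : Fin n ≃ {x // x ∈ T} := T.equivFin.symm with he
  set v : Fin n → ℚ := fun i => (2:ℚ) ^ ((e i : ℤ)) with hv
  have hvinj : Function.Injective v := by
    intro i j hij
    have h2 : Function.Injective (fun s : ℤ => (2:ℚ) ^ s) :=
      zpow_right_injective₀ (by norm_num) (by norm_num)
    exact e.injective (Subtype.ext (h2 hij))
  obtain ⟨D, p, hDpos, hsol⟩ := wsolve (Matrix.vandermonde v)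
    (Matrix.det_vandermonde_ne_zero_iff.mpr hvinj)
    (fun i => if ((e i : ℤ)) = s₀ then 1 else 0)
  -- the key identity over K, for all s ∈ T
  have hkey : ∀ s ∈ T, ∑ k, (p k : K) * ((2:K) ^ s) ^ (k:ℕ)
      = (D:K) * (if s = s₀ then 1 else 0) := by
    intro s hs
    have hi : (e (e.symm ⟨s, hs⟩) : ℤ) = s := by simp
    have hQ : ∑ k, (p k : ℚ) * ((2:ℚ) ^ s) ^ (k:ℕ)
        = (D:ℚ) * (if s = s₀ then 1 else 0) := by
      have h1 := hsol (e.symm ⟨s, hs⟩)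
      rw [hi] at h1
      rw [← h1]
      refine Finset.sum_congr rfl fun k _ => ?_
      simp only [Matrix.vandermonde_apply, hv, hi]
    by_cases hss : s = s₀
    · rw [if_pos hss] at hQ ⊢
      rw [mul_one] at hQ ⊢
      have h2 := congrArg (fun q : ℚ => (q : K)) hQ
      push_cast at h2
      exact h2
    · rw [if_neg hss] at hQ ⊢
      rw [mul_zero] at hQ ⊢
      have h2 := congrArg (fun q : ℚ => (q : K)) hQ
      push_cast at h2
      exact h2
  -- sum of the integer coefficients is zero
  have hp0 : ∑ k, p k = 0 := by
    have h0T : (0:ℤ) ∈ T := Finset.mem_insert_self 0 f.coeff.support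
    have := hkey 0 h0T
    rw [if_neg (Ne.symm hs₀)] at this
    simp only [zpow_zero, one_pow, mul_one, mul_zero] at this
    exact_mod_cast this
  -- Step 1 conclusion
  set N₁ : ℕ := ∑ k, (p k).natAbs * 1 with hN₁
  have step1 : ∀ x : K, x ≠ 0 → WRep f N₁ ((D:K) * a * x ^ s₀) := by
    intro x hx
    have hrep := wrep_sum (f := f) Finset.univ (fun k => (p k).natAbs * 1)
      (fun k => p k • (WEv f ((2:K) ^ (k:ℕ) * x) - WEv f 1))
      (fun k _ => wrep_zsmul (wrep_pair (mul_ne_zero (pow_ne_zero _ two_ne_zero) hx) one_ne_zero) (p k))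
    have hval : ∑ k, p k • (WEv f ((2:K) ^ (k:ℕ) * x) - WEv f 1)
        = (D:K) * a * x ^ s₀ := by
      have hs1 : ∑ k, p k • WEv f ((2:K) ^ (k:ℕ) * x) = (D:K) * a * x ^ s₀ := by
        simp only [WEv, zsmul_eq_mul, Finset.mul_sum]
        rw [Finset.sum_comm]
        have : ∀ s ∈ f.coeff.support,
            ∑ k, (p k : K) * (f.coeff s * ((2:K) ^ (k:ℕ) * x) ^ s)
            = (if s = s₀ then f.coeff s * x ^ s * (D:K) else 0) := by
          intro s hs
          have hsT : s ∈ T := Finset.mem_insert_of_mem hs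
          have hmz : ∀ k : Fin n, ((2:K) ^ (k:ℕ) * x) ^ s
              = ((2:K) ^ s) ^ (k:ℕ) * x ^ s := by
            intro k
            rw [mul_zpow, ← zpow_natCast (2:K) (k:ℕ), ← zpow_mul, mul_comm ((k:ℕ):ℤ) s,
              zpow_mul, zpow_natCast]
          calc ∑ k, (p k : K) * (f.coeff s * ((2:K) ^ (k:ℕ) * x) ^ s)
              = f.coeff s * x ^ s * ∑ k, (p k : K) * ((2:K) ^ s) ^ (k:ℕ) := by
                rw [Finset.mul_sum]
                exact Finset.sum_congr rfl fun k _ => by rw [hmz k]; ring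
            _ = (if s = s₀ then f.coeff s * x ^ s * (D:K) else 0) := by
                rw [hkey s hsT]; split_ifs <;> simp
        rw [Finset.sum_congr rfl this, Finset.sum_ite_eq' f.coeff.support s₀
          (fun s => f.coeff s * x ^ s * (D:K)), if_pos hs₀S]
        ring
      have hs2 : ∑ k, p k • WEv f (1:K) = 0 := by
        rw [← Finset.sum_smul, hp0, zero_smul]
      simp only [smul_sub, Finset.sum_sub_distrib, hs1, hs2, sub_zero]
    rwa [hval] at hrep
  -- Step 2 : values of `(D:K) * a * t ^ m` for `m = s₀.natAbs`
  set m : ℕ := s₀.natAbs with hm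
  have hmpos : 0 < m := Int.natAbs_pos.mpr hs₀
  have step2 : ∀ t : K, t ≠ 0 → WRep f N₁ ((D:K) * a * t ^ m) := by
    intro t ht
    rcases Int.natAbs_eq s₀ with hcase | hcase
    · have := step1 t ht
      rwa [hcase, zpow_natCast] at this
    · have := step1 t⁻¹ (inv_ne_zero ht)
      rwa [hcase, zpow_neg, ← inv_zpow, inv_inv, zpow_natCast] at this
  -- Step 3 : Vandermonde for the binomial trick
  set cc : Fin (m+1) → ℚ := fun r => (r:ℚ) + 1 with hcc
  have hccinj : Function.Injective cc := by
    intro i j hij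
    have : ((i:ℕ):ℚ) = ((j:ℕ):ℚ) := by
      simpa [hcc] using hij
    exact Fin.ext (by exact_mod_cast this)
  obtain ⟨D₂, q, hD₂pos, hsol₂⟩ := wsolve (Matrix.vandermonde cc).transpose
    (by rw [Matrix.det_transpose]; exact Matrix.det_vandermonde_ne_zero_iff.mpr hccinj)
    (fun j => if (j:ℕ) = 1 then 1 else 0)
  -- key identity for the binomial coefficients, over K
  have hkey₂ : ∀ j : Fin (m+1), ∑ r, (q r : K) * (((r:ℕ):K) + 1) ^ (j:ℕ)
      = (D₂:K) * (if (j:ℕ) = 1 then 1 else 0) := by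
    intro j
    have hQ : ∑ r, (q r : ℚ) * (cc r) ^ (j:ℕ)
        = (D₂:ℚ) * (if (j:ℕ) = 1 then 1 else 0) := by
      have h1 := hsol₂ j
      rw [← h1]
      refine Finset.sum_congr rfl fun r _ => ?_
      simp only [Matrix.transpose_apply, Matrix.vandermonde_apply]
    by_cases hjj : (j:ℕ) = 1
    · rw [if_pos hjj] at hQ ⊢
      rw [mul_one] at hQ ⊢
      have h2 := congrArg (fun u : ℚ => (u : K)) hQ
      push_cast at h2
      simpa [hcc] using h2
    · rw [if_neg hjj] at hQ ⊢
      rw [mul_zero] at hQ ⊢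
      have h2 := congrArg (fun u : ℚ => (u : K)) hQ
      push_cast at h2
      simpa [hcc] using h2
  -- the binomial identity
  have hbin : ∀ x : K, ∑ r, (q r : K) * (1 + (((r:ℕ):K) + 1) * x) ^ m
      = (D₂:K) * ((m:K) * x) := by
    intro x
    have hexp : ∀ r : Fin (m+1), (1 + (((r:ℕ):K) + 1) * x) ^ m
        = ∑ j ∈ Finset.range (m+1), ((((r:ℕ):K) + 1) ^ j * x ^ j) * (m.choose j : K) := by
      intro r
      rw [add_comm (1:K), add_pow]
      exact Finset.sum_congr rfl fun j _ => by rw [mul_pow, one_pow, mul_one]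
    have j₁ : Fin (m+1) := ⟨1, by omega⟩
    calc ∑ r, (q r : K) * (1 + (((r:ℕ):K) + 1) * x) ^ m
        = ∑ r, ∑ j ∈ Finset.range (m+1),
            (q r : K) * (((((r:ℕ):K) + 1) ^ j * x ^ j) * (m.choose j : K)) := by
          exact Finset.sum_congr rfl fun r _ => by rw [hexp r, Finset.mul_sum]
      _ = ∑ j ∈ Finset.range (m+1), ∑ r,
            (q r : K) * (((((r:ℕ):K) + 1) ^ j * x ^ j) * (m.choose j : K)) :=
          Finset.sum_comm
      _ = ∑ j ∈ Finset.range (m+1), ((m.choose j : K) * x ^ j)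
            * ∑ r, (q r : K) * (((r:ℕ):K) + 1) ^ j := by
          refine Finset.sum_congr rfl fun j _ => ?_
          rw [Finset.mul_sum]
          exact Finset.sum_congr rfl fun r _ => by ring
      _ = ∑ j : Fin (m+1), ((m.choose (j:ℕ) : K) * x ^ (j:ℕ))
            * ∑ r, (q r : K) * (((r:ℕ):K) + 1) ^ (j:ℕ) := Finset.sum_range _
      _ = ∑ j : Fin (m+1), (if j = (⟨1, by omega⟩ : Fin (m+1)) then
            ((m.choose (j:ℕ) : K) * x ^ (j:ℕ)) * (D₂:K) else 0) := by
          refine Finset.sum_congr rfl fun j _ => ?_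
          rw [hkey₂ j]
          by_cases hj : (j:ℕ) = 1
          · rw [if_pos hj, if_pos (Fin.ext hj)]
            ring
          · rw [if_neg hj, if_neg (fun hcon => hj (by rw [hcon]))]
            ring
      _ = (D₂:K) * ((m:K) * x) := by
          rw [Finset.sum_ite_eq' Finset.univ (⟨1, by omega⟩ : Fin (m+1))
            (fun j => ((m.choose (j:ℕ) : K) * x ^ (j:ℕ)) * (D₂:K)),
            if_pos (Finset.mem_univ _)]
          simp [Nat.choose_one_right]
          ring
  -- Step B : representing γ * x for good x
  set N₂ : ℕ := ∑ r, (q r).natAbs * N₁ with hN₂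
  set γ : K := (D:K) * a * ((D₂:K) * (m:K)) with hγ
  have hγ0 : γ ≠ 0 := by
    rw [hγ]
    apply mul_ne_zero (mul_ne_zero (Nat.cast_ne_zero.mpr hDpos.ne') ha)
    exact mul_ne_zero (Nat.cast_ne_zero.mpr hD₂pos.ne') (Nat.cast_ne_zero.mpr hmpos.ne')
  have stepB : ∀ x : K, (∀ r : Fin (m+1), (1:K) + (((r:ℕ):K) + 1) * x ≠ 0) →
      WRep f N₂ (γ * x) := by
    intro x hx
    have hrep := wrep_sum (f := f) Finset.univ (fun r => (q r).natAbs * N₁)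
      (fun r => q r • ((D:K) * a * (1 + (((r:ℕ):K) + 1) * x) ^ m))
      (fun r _ => wrep_zsmul (step2 _ (hx r)) (q r))
    have hval : ∑ r, q r • ((D:K) * a * (1 + (((r:ℕ):K) + 1) * x) ^ m) = γ * x := by
      simp only [zsmul_eq_mul]
      calc ∑ r, (q r : K) * ((D:K) * a * (1 + (((r:ℕ):K) + 1) * x) ^ m)
          = (D:K) * a * ∑ r, (q r : K) * (1 + (((r:ℕ):K) + 1) * x) ^ m := by
            rw [Finset.mul_sum]
            exact Finset.sum_congr rfl fun r _ => by ring
        _ = γ * x := by rw [hbin x, hγ]; ring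
    rwa [hval] at hrep
  -- Final step
  refine ⟨N₂ + N₂ + 1, by omega, fun c => ?_⟩
  -- choose a good splitting point
  set B : Finset K :=
    (Finset.univ.image fun r : Fin (m+1) => -((((r:ℕ):K) + 1))⁻¹) ∪
    (Finset.univ.image fun r : Fin (m+1) => c / γ + ((((r:ℕ):K) + 1))⁻¹) with hB
  obtain ⟨x, hxB⟩ := Infinite.exists_notMem_finset B
  have hcr0 : ∀ r : Fin (m+1), (((r:ℕ):K) + 1) ≠ 0 := by
    intro r
    have h1 : (((r:ℕ) + 1 : ℕ) : K) ≠ 0 := Nat.cast_ne_zero.mpr (Nat.succ_ne_zero _)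
    push_cast at h1
    exact h1
  have hgood : ∀ r : Fin (m+1), (1:K) + (((r:ℕ):K) + 1) * x ≠ 0 := by
    intro r hcon
    apply hxB
    have hx1 : x = -((((r:ℕ):K) + 1))⁻¹ := by
      have hc := hcr0 r
      field_simp
      linear_combination hcon
    exact Finset.mem_union_left _ (Finset.mem_image.mpr ⟨r, Finset.mem_univ r, hx1.symm⟩)
  set y : K := c / γ - x with hy
  have hgoody : ∀ r : Fin (m+1), (1:K) + (((r:ℕ):K) + 1) * y ≠ 0 := by
    intro r hcon
    apply hxB
    have hy1 : y = -((((r:ℕ):K) + 1))⁻¹ := by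
      have hc := hcr0 r
      field_simp
      linear_combination hcon
    have hx1 : x = c / γ + ((((r:ℕ):K) + 1))⁻¹ := by
      rw [hy] at hy1
      linear_combination -hy1
    exact Finset.mem_union_right _ (Finset.mem_image.mpr ⟨r, Finset.mem_univ r, hx1.symm⟩)
  have hrep := wrep_add (stepB x hgood) (stepB y hgoody)
  have hsum : γ * x + γ * y = c := by
    rw [hy]
    field_simp
    ring
  rw [hsum] at hrep
  obtain ⟨X, Y, hX, hY, hc⟩ := wrep_succ hrep
  exact ⟨X, Y, hX, hY, by simpa [WEv] using hc⟩
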